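/- (Sparse generator matrices fail) Let X be a finite field and A_{n×m_n} random n×m_n matrices over X with average density D(A_{n×m_n}) = (1/(n m_n)) E[∑_{i,j} 1{A(i,j) ≠ 0}]. If liminf_n D(A_{n×m_n}) < 1 − 1/|X|, then the sequence of random linear codes F_n(x) = x·A_{n×m_n} is not asymptotically good (with δ = 0). -/

import Mathlib

open Finset Filter

open scoped Classical

noncomputable def empDist {X : Type*} [Fintype X] {n : ℕ} (x : Fin n → X) : X → ℝ :=
  fun a => ((univ.filter fun i => x i = a).card : ℝ) / n

noncomputable def specS {X : Type*} [Fintype X] {n : ℕ}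
    (A : Finset (Fin n → X)) (P : X → ℝ) : ℝ :=
  ((A.filter fun x => empDist x = P).card : ℝ) / (A.card : ℝ)

noncomputable def jointSpec {X Y : Type*} [Fintype X] [Fintype Y] {n m : ℕ}
    (f : (Fin n → X) → (Fin m → Y)) (P : X → ℝ) (Q : Y → ℝ) : ℝ :=
  ((univ.filter fun x : Fin n → X => empDist x = P ∧ empDist (f x) = Q).card : ℝ) /
    ((Fintype.card X : ℝ) ^ n)

noncomputable def fullJointSpec (X Y : Type*) [Fintype X] [Fintype Y] (n m : ℕ)
    (P : X → ℝ) (Q : Y → ℝ) : ℝ :=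
  specS (univ : Finset (Fin n → X)) P * specS (univ : Finset (Fin m → Y)) Q

noncomputable def alphaE {X Y : Type*} [Fintype X] [Fintype Y] {n m : ℕ} {Ω : Type*}
    [Fintype Ω] (μ : Ω → ℝ) (F : Ω → (Fin n → X) → (Fin m → Y))
    (P : X → ℝ) (Q : Y → ℝ) : ℝ :=
  (∑ ω, μ ω * jointSpec (F ω) P Q) / fullJointSpec X Y n m P Q

def permAct {X : Type*} {n : ℕ} (σ : Equiv.Perm (Fin n)) (x : Fin n → X) : Fin n → X :=
  fun i => x (σ.symm i)

noncomputable def entH {X : Type*} [Fintype X] (P : X → ℝ) : ℝ :=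
  ∑ a, -(P a * Real.log (P a))

noncomputable def binEnt (x : ℝ) : ℝ := -(x * Real.log x) - (1 - x) * Real.log (1 - x)

section Aux

lemma gibbs {p t : ℝ} (hp : 0 < p) (hpt : p < t) (ht1 : t < 1) :
    0 < t * Real.log (t / p) + (1 - t) * Real.log ((1 - t) / (1 - p)) := by
  have ht0 : 0 < t := hp.trans hpt
  have h1t : 0 < 1 - t := by linarith
  have h1p : 0 < 1 - p := by linarith
  have hx : p / t ∈ Set.Ioi (0:ℝ) := Set.mem_Ioi.mpr (by positivity)
  have hy : (1 - p) / (1 - t) ∈ Set.Ioi (0:ℝ) := Set.mem_Ioi.mpr (by positivity)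
  have hne : p / t ≠ (1 - p) / (1 - t) := by
    intro h
    rw [div_eq_div_iff ht0.ne' h1t.ne'] at h
    nlinarith
  have key := strictConcaveOn_log_Ioi.2 hx hy hne ht0 h1t (by ring)
  have harg : t • (p / t) + (1 - t) • ((1 - p) / (1 - t)) = 1 := by
    simp only [smul_eq_mul]
    field_simp
    ring
  rw [harg, Real.log_one] at key
  have h1 : Real.log (t / p) = - Real.log (p / t) := by
    rw [← Real.log_inv, inv_div]
  have h2 : Real.log ((1 - t) / (1 - p)) = - Real.log ((1 - p) / (1 - t)) := by
    rw [← Real.log_inv, inv_div]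
  simp only [smul_eq_mul] at key
  rw [h1, h2]; nlinarith

lemma choose_bound {m k : ℕ} (hk : k ≤ m) {t : ℝ} (ht0 : 0 < t) (ht1 : t < 1) :
    (m.choose k : ℝ) * (t ^ k * (1 - t) ^ (m - k)) ≤ 1 := by
  have h1t : (0:ℝ) < 1 - t := by linarith
  have hsum : (1:ℝ) = ∑ j ∈ range (m+1), t ^ j * (1 - t) ^ (m - j) * (m.choose j) := by
    have := add_pow t (1-t) m
    rw [show t + (1 - t) = 1 by ring, one_pow] at this
    exact this
  have hterm : t ^ k * (1 - t) ^ (m - k) * (m.choose k)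
      ≤ ∑ j ∈ range (m+1), t ^ j * (1 - t) ^ (m - j) * (m.choose j) :=
    Finset.single_le_sum (f := fun j => t ^ j * (1 - t) ^ (m - j) * (m.choose j : ℝ))
      (fun j _ => by positivity) (mem_range.mpr (Nat.lt_succ_of_le hk))
  rw [← hsum] at hterm
  linarith [hterm]

lemma exp_le_pow_mul {m k : ℕ} (hk : k ≤ m) {t a b : ℝ}
    (ha : 1 ≤ a) (hb0 : 0 < b) (hb1 : b ≤ 1) (hkt : t * m ≤ k) :
    Real.exp ((t * Real.log a + (1 - t) * Real.log b) * m) ≤ a ^ k * b ^ (m - k) := by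
  have ha0 : (0:ℝ) < a := lt_of_lt_of_le one_pos ha
  have hloga : 0 ≤ Real.log a := Real.log_nonneg ha
  have hlogb : Real.log b ≤ 0 := Real.log_nonpos hb0.le hb1
  have h1 : a ^ k * b ^ (m - k)
      = Real.exp ((k : ℝ) * Real.log a + ((m : ℝ) - k) * Real.log b) := by
    rw [show a ^ k = Real.exp (Real.log (a ^ k)) from (Real.exp_log (by positivity)).symm,
      show b ^ (m - k) = Real.exp (Real.log (b ^ (m - k))) from (Real.exp_log (by positivity)).symm,
      ← Real.exp_add, Real.log_pow, Real.log_pow, Nat.cast_sub hk]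
  rw [h1, Real.exp_le_exp]
  have hmk : (k:ℝ) ≤ m := by exact_mod_cast hk
  nlinarith [mul_nonneg (sub_nonneg.mpr hkt) hloga,
    mul_nonpos_of_nonneg_of_nonpos (sub_nonneg.mpr hkt) hlogb]

variable {K : Type*} [Fintype K] [Field K]

set_option linter.unusedSectionVars false

lemma count_single {n : ℕ} (i : Fin n) (a : K) :
    (univ.filter fun j => (Pi.single i (1:K) : Fin n → K) j = a).card
      = if a = 1 then 1 else if a = 0 then n - 1 else 0 := by
  classical
  split_ifs with h1 h0
  · subst h1
    rw [Finset.card_eq_one]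
    refine ⟨i, ?_⟩
    ext j
    simp only [mem_filter, mem_univ, true_and, mem_singleton, Pi.single_apply]
    constructor
    · intro hj; by_contra hji; rw [if_neg hji] at hj; exact zero_ne_one hj
    · intro hj; rw [if_pos hj]
  · subst h0
    have : (univ.filter fun j => (Pi.single i (1:K) : Fin n → K) j = 0) = univ.erase i := by
      ext j
      simp only [mem_filter, mem_univ, true_and, mem_erase, Pi.single_apply]
      constructor
      · intro hj
        refine ⟨fun hji => ?_, trivial⟩
        rw [if_pos hji] at hj; exact one_ne_zero hj
      · intro hj; rw [if_neg hj.1]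
    rw [this, Finset.card_erase_of_mem (mem_univ i), card_univ, Fintype.card_fin]
  · rw [Finset.card_eq_zero]
    ext j
    simp only [mem_filter, mem_univ, true_and, Pi.single_apply, notMem_empty, iff_false]
    intro hj
    by_cases hji : j = i
    · rw [if_pos hji] at hj; exact h1 hj.symm
    · rw [if_neg hji] at hj; exact h0 hj.symm

lemma empDist_single (n : ℕ) (i i' : Fin n) :
    empDist (Pi.single i (1:K)) = empDist (Pi.single i' (1:K)) := by
  funext a
  unfold empDist
  rw [count_single, count_single]

lemma eq_single_of_empDist {n : ℕ} (i₀ : Fin n) (x : Fin n → K)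
    (h : empDist x = empDist (Pi.single i₀ (1:K))) : ∃ i, x = Pi.single i (1:K) := by
  have hn : 0 < n := i₀.pos
  have hn' : (0:ℝ) < n := by exact_mod_cast hn
  have key : ∀ a : K, (univ.filter fun j => x j = a).card
      = if a = 1 then 1 else if a = 0 then n - 1 else 0 := by
    intro a
    have h2 := congrFun h a
    unfold empDist at h2
    rw [count_single] at h2
    rw [div_eq_div_iff hn'.ne' hn'.ne'] at h2
    have h3 := mul_right_cancel₀ hn'.ne' h2
    exact_mod_cast h3
  have h1 : (univ.filter fun j => x j = 1).card = 1 := by simpa using key 1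
  obtain ⟨i, hi⟩ := Finset.card_eq_one.mp h1
  have hmem : ∀ j, x j = 1 ↔ j = i := by
    intro j
    constructor
    · intro hj
      have : j ∈ univ.filter fun j' => x j' = 1 := by simp [hj]
      rw [hi] at this; simpa using this
    · intro hj
      subst hj
      have : j ∈ ({j} : Finset _) := mem_singleton_self j
      rw [← hi] at this; simpa using this
  refine ⟨i, funext fun j => ?_⟩
  by_cases hj : j = i
  · subst hj
    rw [Pi.single_eq_same]
    exact (hmem j).mpr rfl
  · rw [Pi.single_eq_of_ne hj]
    by_cases hx1 : x j = 1
    · exact absurd ((hmem j).mp hx1) hj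
    by_cases hx0 : x j = 0
    · exact hx0
    · exfalso
      have hk := key (x j)
      rw [if_neg hx1, if_neg hx0, Finset.card_eq_zero] at hk
      have : j ∈ univ.filter fun j' => x j' = x j := by simp
      rw [hk] at this
      exact notMem_empty j this

lemma card_typeclass_single_le {n : ℕ} (i₀ : Fin n) :
    (univ.filter fun x : Fin n → K => empDist x = empDist (Pi.single i₀ (1:K))).card ≤ n := by
  have hsub : (univ.filter fun x : Fin n → K => empDist x = empDist (Pi.single i₀ (1:K)))
      ⊆ Finset.image (fun i : Fin n => Pi.single i (1:K)) univ := by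
    intro x hx
    rw [mem_filter] at hx
    obtain ⟨i, rfl⟩ := eq_single_of_empDist i₀ x hx.2
    exact mem_image.mpr ⟨i, mem_univ i, rfl⟩
  calc (univ.filter fun x : Fin n → K => empDist x = empDist (Pi.single i₀ (1:K))).card
      ≤ (Finset.image (fun i : Fin n => Pi.single i (1:K)) univ).card := card_le_card hsub
    _ ≤ (univ : Finset (Fin n)).card := card_image_le
    _ = n := by rw [card_univ, Fintype.card_fin]

lemma card_typeclass_le_choose {m : ℕ} (hm : 0 < m) (y : Fin m → K) :
    (univ.filter fun z : Fin m → K => empDist z = empDist y).card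
      ≤ m.choose ((univ.filter fun j => y j = 0).card)
        * (Fintype.card K - 1) ^ (m - (univ.filter fun j => y j = 0).card) := by
  classical
  set k := (univ.filter fun j => y j = 0).card with hk
  have hm' : (0:ℝ) < m := by exact_mod_cast hm
  have hz : ∀ z : Fin m → K, empDist z = empDist y →
      (univ.filter fun j => z j = 0).card = k := by
    intro z hzy
    have h2 := congrFun hzy 0
    unfold empDist at h2
    rw [div_eq_div_iff hm'.ne' hm'.ne'] at h2
    have h3 := mul_right_cancel₀ hm'.ne' h2
    exact_mod_cast h3
  have hsub : (univ.filter fun z : Fin m → K => empDist z = empDist y)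
      ⊆ (Finset.powersetCard k (univ : Finset (Fin m))).biUnion
          (fun S => Fintype.piFinset fun j => if j ∈ S then ({(0:K)} : Finset K) else univ.erase 0) := by
    intro z hzmem
    rw [mem_filter] at hzmem
    rw [mem_biUnion]
    refine ⟨univ.filter fun j => z j = 0, ?_, ?_⟩
    · rw [Finset.mem_powersetCard]
      exact ⟨filter_subset _ _, hz z hzmem.2⟩
    · rw [Fintype.mem_piFinset]
      intro j
      by_cases hj : z j = 0
      · rw [if_pos (by simp [hj])]; simp [hj]
      · rw [if_neg (by simp [hj])]
        exact mem_erase.mpr ⟨hj, mem_univ _⟩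
  have hcard : ∀ S ∈ Finset.powersetCard k (univ : Finset (Fin m)),
      (Fintype.piFinset fun j => if j ∈ S then ({(0:K)} : Finset K) else univ.erase 0).card
        = (Fintype.card K - 1) ^ (m - k) := by
    intro S hS
    rw [Finset.mem_powersetCard] at hS
    rw [Fintype.card_piFinset]
    have : ∀ j : Fin m, (if j ∈ S then ({(0:K)} : Finset K) else univ.erase 0).card
        = if j ∈ S then 1 else Fintype.card K - 1 := by
      intro j
      split_ifs with h
      · simp
      · rw [Finset.card_erase_of_mem (mem_univ _), card_univ]
    rw [Finset.prod_congr rfl (fun j _ => this j)]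
    have hps := Finset.prod_sdiff (f := fun j : Fin m => if j ∈ S then 1 else Fintype.card K - 1) hS.1
    have h1 : (∏ j ∈ S, if j ∈ S then 1 else Fintype.card K - 1) = 1 := by
      rw [Finset.prod_congr rfl (fun j hj => if_pos hj), Finset.prod_const_one]
    have h2 : (∏ j ∈ univ \ S, if j ∈ S then 1 else Fintype.card K - 1)
        = (Fintype.card K - 1) ^ (m - k) := by
      rw [Finset.prod_congr rfl (fun j hj => if_neg (mem_sdiff.mp hj).2), Finset.prod_const,
        Finset.card_sdiff_of_subset hS.1, card_univ, Fintype.card_fin, hS.2]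
    rw [← hps, h1, h2, mul_one]
  calc (univ.filter fun z : Fin m → K => empDist z = empDist y).card
      ≤ _ := card_le_card hsub
    _ ≤ ∑ S ∈ Finset.powersetCard k (univ : Finset (Fin m)),
          (Fintype.piFinset fun j => if j ∈ S then ({(0:K)} : Finset K) else univ.erase 0).card :=
        card_biUnion_le
    _ = ∑ _S ∈ Finset.powersetCard k (univ : Finset (Fin m)), (Fintype.card K - 1) ^ (m - k) :=
        Finset.sum_congr rfl hcard
    _ = (Finset.powersetCard k (univ : Finset (Fin m))).card * (Fintype.card K - 1) ^ (m - k) := by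
        rw [Finset.sum_const, smul_eq_mul]
    _ = m.choose k * (Fintype.card K - 1) ^ (m - k) := by
        rw [Finset.card_powersetCard, card_univ, Fintype.card_fin]

lemma empDist_eq_of_counts {M : ℕ} (z z' : Fin M → K)
    (h : ∀ a, (univ.filter fun j => z j = a).card = (univ.filter fun j => z' j = a).card) :
    empDist z = empDist z' := funext fun a => by unfold empDist; rw [h a]

end Aux

set_option maxHeartbeats 1000000 in
theorem stmt18 {K : Type*} [Fintype K] [Field K]
    (m : ℕ → ℕ) (hm : ∀ n, 0 < m n)
    (Ω : ℕ → Type*) [∀ n, Fintype (Ω n)] (μ : ∀ n, Ω n → ℝ)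
    (hμ0 : ∀ n ω, 0 ≤ μ n ω) (hμ1 : ∀ n, ∑ ω, μ n ω = 1)
    (A : ∀ n, Ω n → Matrix (Fin n) (Fin (m n)) K)
    (Rbar : ℝ)
    (hR : ∀ ε > (0 : ℝ), ∀ᶠ n : ℕ in atTop, (n : ℝ) / (m n : ℝ) ≤ Rbar + ε)
    (hsparse : ∃ c, c < 1 - 1 / (Fintype.card K : ℝ) ∧
      ∃ᶠ n : ℕ in atTop, (∑ ω, μ n ω *
          ((univ.filter fun p : Fin n × Fin (m n) => A n ω p.1 p.2 ≠ 0).card : ℝ)) /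
        ((n : ℝ) * (m n : ℝ)) ≤ c) :
    ¬ (∀ ε > (0 : ℝ), ∀ᶠ n : ℕ in atTop, ∀ x : Fin n → K, x ≠ 0 → ∀ y : Fin (m n) → K,
        alphaE (μ n) (fun ω (x : Fin n → K) => Matrix.vecMul x (A n ω))
            (empDist x) (empDist y)
          ≤ Real.exp (n * ε)) := by
  intro h
  obtain ⟨c, hc, hfreq⟩ := hsparse
  have hq2 : 1 < Fintype.card K := Fintype.one_lt_card
  set q : ℕ := Fintype.card K with hqdef
  have hqR : (1:ℝ) < (q:ℝ) := by exact_mod_cast hq2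
  have hq0 : (0:ℝ) < (q:ℝ) := by linarith
  have hp0 : (0:ℝ) < 1/(q:ℝ) := by positivity
  have hp1 : 1/(q:ℝ) < 1 := by rw [div_lt_one hq0]; exact hqR
  set c₀ : ℝ := max c 0 with hc₀def
  have hc₀ : c₀ < 1 - 1/(q:ℝ) := max_lt hc (by linarith)
  set t : ℝ := (1 - c₀ + 1/(q:ℝ))/2 with htdef
  have htp : 1/(q:ℝ) < t := by
    have := hc₀; simp only [htdef]; linarith
  have ht1 : t < 1 := by
    have h0 : 0 ≤ c₀ := le_max_right _ _
    simp only [htdef]; linarith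
  have ht0 : 0 < t := lt_trans hp0 htp
  set δ0 : ℝ := 1 - c₀ - t with hδdef
  have hδ0 : 0 < δ0 := by simp only [hδdef, htdef]; linarith
  have hqm1 : (0:ℝ) < (q:ℝ) - 1 := by linarith
  set a : ℝ := t * q with hadef
  set b : ℝ := (1 - t) * q / ((q:ℝ) - 1) with hbdef
  have ha : 1 < a := by
    rw [hadef]; exact (div_lt_iff₀ hq0).mp (by rw [one_div] at htp ⊢; exact htp)
  have hb0 : 0 < b := by rw [hbdef]; have : 0 < 1 - t := by linarith
                         positivity
  have hb1 : b < 1 := by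
    rw [hbdef, div_lt_one hqm1]; nlinarith
  set γ : ℝ := t * Real.log a + (1 - t) * Real.log b with hγdef
  have hγ : 0 < γ := by
    have hg := gibbs hp0 htp ht1
    have e1 : t / (1/(q:ℝ)) = a := by rw [hadef]; field_simp
    have e2 : (1 - t)/(1 - 1/(q:ℝ)) = b := by
      rw [hbdef]
      have hq1 : (1:ℝ) - 1/(q:ℝ) = ((q:ℝ)-1)/(q:ℝ) := by field_simp
      rw [hq1, div_div_eq_mul_div]
    rw [e1, e2] at hg
    exact hg
  set R1 : ℝ := max (Rbar + 1) 1 with hR1def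
  have hR1 : (1:ℝ) ≤ R1 := le_max_right _ _
  have hR1p : (0:ℝ) < R1 := lt_of_lt_of_le one_pos hR1
  set ε : ℝ := γ / (4 * R1) with hεdef
  have hε : 0 < ε := by positivity
  have h' := h ε hε
  have hEv1 : ∀ᶠ n : ℕ in atTop, (n:ℝ)/(m n) ≤ R1 :=
    (hR 1 one_pos).mono fun n hn => hn.trans (le_max_left _ _)
  have hlo := isLittleO_pow_exp_pos_mul_atTop q (half_pos hγ)
  rw [Asymptotics.isLittleO_iff] at hlo
  have hc' : (0:ℝ) < δ0 / Real.exp (γ/2) := by positivity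
  obtain ⟨X0, hX0⟩ := eventually_atTop.mp (hlo hc')
  have hEv4 : ∀ᶠ n : ℕ in atTop, R1 * X0 ≤ (n:ℝ) ∧ 1 ≤ n :=
    (tendsto_natCast_atTop_atTop.eventually_ge_atTop (R1 * X0)).and (eventually_ge_atTop 1)
  obtain ⟨n, hd, hbound, hnm, hnX0, hn1⟩ :=
    (hfreq.and_eventually (h'.and (hEv1.and hEv4))).exists
  -- fixed n from now on
  have hM0 : 0 < m n := hm n
  have hMR : (0:ℝ) < (m n : ℝ) := by exact_mod_cast hM0
  have hnR : (1:ℝ) ≤ (n:ℝ) := by exact_mod_cast hn1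
  have hnR0 : (0:ℝ) < (n:ℝ) := by linarith
  have hnM : (n:ℝ) ≤ R1 * (m n) := by
    rw [div_le_iff₀ hMR] at hnm; linarith [hnm]
  have hX0M : X0 ≤ (m n : ℝ) + 1 := by
    have h1 : X0 ≤ (n:ℝ)/R1 := (le_div_iff₀ hR1p).mpr (by linarith [mul_comm R1 X0])
    have h2 : (n:ℝ)/R1 ≤ m n := (div_le_iff₀ hR1p).mpr (by linarith [mul_comm R1 ((m n : ℝ))])
    linarith
  have hpoly : ((m n:ℝ)+1)^q ≤ δ0 * Real.exp (γ/2 * (m n)) := by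
    have h1 := hX0 ((m n:ℝ)+1) hX0M
    rw [Real.norm_eq_abs, Real.norm_eq_abs, abs_of_nonneg (by positivity),
      abs_of_nonneg (Real.exp_pos _).le] at h1
    have h2 : γ/2 * ((m n:ℝ)+1) = γ/2 * (m n) + γ/2 := by ring
    rw [h2, Real.exp_add] at h1
    calc ((m n:ℝ)+1)^q ≤ δ0 / Real.exp (γ/2) * (Real.exp (γ/2 * m n) * Real.exp (γ/2)) := h1
      _ = δ0 * Real.exp (γ/2 * m n) := by
          field_simp
  -- Markov: rows with many zeros
  set Gf : Ω n → Finset (Fin n) :=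
    fun ω => univ.filter fun i => t * (m n : ℝ) ≤ ((univ.filter fun j => A n ω i j = 0).card : ℝ)
    with hGdef
  have hGsum : δ0 * n ≤ ∑ ω, μ n ω * ((Gf ω).card : ℝ) := by
    have hnnz : ∀ ω, ((univ.filter fun p : Fin n × Fin (m n) => A n ω p.1 p.2 ≠ 0).card : ℝ)
        = (n : ℝ) * (m n) - ∑ i, ((univ.filter fun j => A n ω i j = 0).card : ℝ) := by
      intro ω
      have hsplit : (univ.filter fun p : Fin n × Fin (m n) => A n ω p.1 p.2 ≠ 0).card
          = ∑ i, (univ.filter fun j => A n ω i j ≠ 0).card := by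
        rw [Finset.card_filter, Fintype.sum_prod_type]
        exact Finset.sum_congr rfl fun i _ => (Finset.card_filter _ _).symm
      have hzero : ∀ i : Fin n, ((univ.filter fun j => A n ω i j ≠ 0).card : ℝ)
          = (m n : ℝ) - ((univ.filter fun j => A n ω i j = 0).card : ℝ) := by
        intro i
        have hz := Finset.card_filter_add_card_filter_not
          (s := (univ : Finset (Fin (m n)))) (p := fun j => A n ω i j = 0)
        rw [card_univ, Fintype.card_fin] at hz
        have hz' : ((univ.filter fun j => A n ω i j = 0).card : ℝ)
            + ((univ.filter fun j => A n ω i j ≠ 0).card : ℝ) = (m n : ℝ) := by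
          exact_mod_cast hz
        linarith [hz']
      rw [hsplit]
      push_cast
      rw [Finset.sum_congr rfl fun i _ => hzero i, Finset.sum_sub_distrib,
        Finset.sum_const, card_univ, Fintype.card_fin, nsmul_eq_mul]
    have hper : ∀ ω, ∑ i, ((univ.filter fun j => A n ω i j = 0).card : ℝ)
        ≤ ((Gf ω).card : ℝ) * (m n) + (n:ℝ) * (t * (m n)) := by
      intro ω
      have hsp := Finset.sum_filter_add_sum_filter_not (univ : Finset (Fin n))
        (fun i => t * (m n : ℝ) ≤ ((univ.filter fun j => A n ω i j = 0).card : ℝ))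
        (fun i => ((univ.filter fun j => A n ω i j = 0).card : ℝ))
      have hbb1 : ∑ i ∈ Gf ω, ((univ.filter fun j => A n ω i j = 0).card : ℝ)
          ≤ ((Gf ω).card : ℝ) * (m n) := by
        calc ∑ i ∈ Gf ω, ((univ.filter fun j => A n ω i j = 0).card : ℝ)
            ≤ ∑ _i ∈ Gf ω, (m n : ℝ) := Finset.sum_le_sum fun i _ => by
              have := (Finset.card_filter_le (univ : Finset (Fin (m n))) (fun j => A n ω i j = 0))
              rw [card_univ, Fintype.card_fin] at this
              exact_mod_cast this
          _ = ((Gf ω).card : ℝ) * (m n) := by rw [Finset.sum_const, nsmul_eq_mul]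
      have hbb2 : ∑ i ∈ univ.filter (fun i => ¬ (t * (m n : ℝ) ≤ ((univ.filter fun j => A n ω i j = 0).card : ℝ))),
            ((univ.filter fun j => A n ω i j = 0).card : ℝ) ≤ (n:ℝ) * (t * (m n)) := by
        have htm : 0 ≤ t * (m n : ℝ) := by positivity
        calc ∑ i ∈ univ.filter (fun i => ¬ (t * (m n : ℝ) ≤ ((univ.filter fun j => A n ω i j = 0).card : ℝ))),
              ((univ.filter fun j => A n ω i j = 0).card : ℝ)
            ≤ ∑ _i ∈ univ.filter (fun i => ¬ (t * (m n : ℝ) ≤ ((univ.filter fun j => A n ω i j = 0).card : ℝ))),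
              (t * (m n : ℝ)) := Finset.sum_le_sum fun i hi =>
                le_of_not_ge (mem_filter.mp hi).2
          _ = ((univ.filter (fun i => ¬ (t * (m n : ℝ) ≤ ((univ.filter fun j => A n ω i j = 0).card : ℝ)))).card : ℝ)
                * (t * (m n : ℝ)) := by rw [Finset.sum_const, nsmul_eq_mul]
          _ ≤ (n:ℝ) * (t * (m n)) := by
              apply mul_le_mul_of_nonneg_right _ htm
              have := Finset.card_filter_le (univ : Finset (Fin n))
                (fun i => ¬ (t * (m n : ℝ) ≤ ((univ.filter fun j => A n ω i j = 0).card : ℝ)))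
              rw [card_univ, Fintype.card_fin] at this
              exact_mod_cast this
      linarith [hsp]
    have hdens : ∑ ω, μ n ω * ((univ.filter fun p : Fin n × Fin (m n) => A n ω p.1 p.2 ≠ 0).card : ℝ)
        ≤ c₀ * ((n:ℝ) * m n) := by
      have hnm0 : (0:ℝ) < (n:ℝ) * m n := by positivity
      rw [div_le_iff₀ hnm0] at hd
      calc ∑ ω, μ n ω * ((univ.filter fun p : Fin n × Fin (m n) => A n ω p.1 p.2 ≠ 0).card : ℝ)
          ≤ c * ((n:ℝ) * m n) := hd
        _ ≤ c₀ * ((n:ℝ) * m n) := mul_le_mul_of_nonneg_right (le_max_left _ _) hnm0.le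
    have hz1 : (1 - c₀) * ((n:ℝ) * m n)
        ≤ ∑ ω, μ n ω * (∑ i, ((univ.filter fun j => A n ω i j = 0).card : ℝ)) := by
      have e : ∀ ω, μ n ω * (∑ i, ((univ.filter fun j => A n ω i j = 0).card : ℝ))
          = μ n ω * ((n:ℝ) * m n)
            - μ n ω * ((univ.filter fun p : Fin n × Fin (m n) => A n ω p.1 p.2 ≠ 0).card : ℝ) := by
        intro ω; rw [hnnz ω]; ring
      rw [Finset.sum_congr rfl fun ω _ => e ω, Finset.sum_sub_distrib, ← Finset.sum_mul, hμ1 n, one_mul]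
      linarith [hdens]
    have hz2 : ∑ ω, μ n ω * (∑ i, ((univ.filter fun j => A n ω i j = 0).card : ℝ))
        ≤ (m n : ℝ) * (∑ ω, μ n ω * ((Gf ω).card : ℝ)) + (n:ℝ) * (t * (m n)) := by
      calc ∑ ω, μ n ω * (∑ i, ((univ.filter fun j => A n ω i j = 0).card : ℝ))
          ≤ ∑ ω, μ n ω * (((Gf ω).card : ℝ) * (m n) + (n:ℝ) * (t * (m n))) :=
            Finset.sum_le_sum fun ω _ => mul_le_mul_of_nonneg_left (hper ω) (hμ0 n ω)
        _ = (m n : ℝ) * (∑ ω, μ n ω * ((Gf ω).card : ℝ))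
            + (∑ ω, μ n ω) * ((n:ℝ) * (t * (m n))) := by
            rw [Finset.sum_congr rfl (fun ω _ => by
              show μ n ω * (((Gf ω).card : ℝ) * (m n) + (n:ℝ) * (t * (m n)))
                = (m n : ℝ) * (μ n ω * ((Gf ω).card : ℝ)) + μ n ω * ((n:ℝ) * (t * (m n)))
              ring), Finset.sum_add_distrib, ← Finset.mul_sum, ← Finset.sum_mul]
        _ = (m n : ℝ) * (∑ ω, μ n ω * ((Gf ω).card : ℝ)) + (n:ℝ) * (t * (m n)) := by
            rw [hμ1 n, one_mul]
    have hiden : (m n:ℝ) * (δ0 * n) = (1 - c₀) * ((n:ℝ) * m n) - (n:ℝ) * (t * (m n)) := by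
      rw [hδdef]; ring
    have hfin : (m n:ℝ) * (δ0 * n) ≤ (m n:ℝ) * (∑ ω, μ n ω * ((Gf ω).card : ℝ)) := by
      linarith [hz1, hz2]
    exact le_of_mul_le_mul_left hfin hMR
  -- pigeonhole over types
  set π : (Fin (m n) → K) → (K → Fin (m n + 1)) := fun z a =>
    ⟨(univ.filter fun j => z j = a).card, by
      have hle := Finset.card_filter_le (univ : Finset (Fin (m n))) (fun j => z j = a)
      rw [card_univ, Fintype.card_fin] at hle
      exact Nat.lt_succ_of_le hle⟩ with hπdef
  have hpart : ∀ ω, ((Gf ω).card : ℝ)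
      = ∑ v : K → Fin (m n + 1), (((Gf ω).filter fun i => π (A n ω i) = v).card : ℝ) := by
    intro ω
    have hpw := Finset.card_eq_sum_card_fiberwise
      (s := Gf ω) (t := (univ : Finset (K → Fin (m n + 1)))) (f := fun i => π (A n ω i))
      (fun x _ => mem_univ _)
    rw [hpw]
    push_cast
    rfl
  have hswap : ∑ ω, μ n ω * ((Gf ω).card : ℝ)
      = ∑ v : K → Fin (m n + 1), ∑ ω, μ n ω * (((Gf ω).filter fun i => π (A n ω i) = v).card : ℝ) := by
    rw [Finset.sum_congr rfl fun ω _ => by rw [hpart ω, Finset.mul_sum]]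
    exact Finset.sum_comm
  set B : ℝ := ((m n : ℝ) + 1)^q with hBdef
  have hB0 : 0 < B := by positivity
  have hcardv : ((Fintype.card (K → Fin (m n + 1))) : ℝ) = B := by
    rw [Fintype.card_fun, Fintype.card_fin, hBdef]
    push_cast
    rfl
  obtain ⟨v, hvmem, hSv⟩ := Finset.exists_le_of_sum_le
    (s := (univ : Finset (K → Fin (m n + 1))))
    (f := fun _ => δ0 * n / B)
    (g := fun v => ∑ ω, μ n ω * (((Gf ω).filter fun i => π (A n ω i) = v).card : ℝ))
    univ_nonempty
    (by
      rw [Finset.sum_const, card_univ, nsmul_eq_mul, hcardv,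
        mul_div_cancel₀ _ hB0.ne']
      rw [← hswap]
      exact hGsum)
  set Sv : ℝ := ∑ ω, μ n ω * (((Gf ω).filter fun i => π (A n ω i) = v).card : ℝ) with hSvdef
  have hSvpos : 0 < Sv := lt_of_lt_of_le (by positivity) hSv
  obtain ⟨ω0, -, hω0⟩ := Finset.exists_lt_of_sum_lt (f := fun _ : Ω n => (0:ℝ))
    (g := fun ω => μ n ω * (((Gf ω).filter fun i => π (A n ω i) = v).card : ℝ))
    (by simpa [← hSvdef] using hSvpos)
  have hcard0 : ((Gf ω0).filter fun i => π (A n ω0 i) = v).Nonempty := by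
    rw [Finset.nonempty_iff_ne_empty]
    intro hemp
    rw [hemp] at hω0; simp at hω0
  obtain ⟨i0, hi0⟩ := hcard0
  obtain ⟨hi0G, hi0v⟩ := mem_filter.mp hi0
  have hi0t : t * (m n : ℝ) ≤ ((univ.filter fun j => A n ω0 i0 j = 0).card : ℝ) :=
    (mem_filter.mp hi0G).2
  -- witnesses
  have hx0 : (Pi.single i0 (1:K) : Fin n → K) ≠ 0 := by
    intro hx
    have h0 := congrFun hx i0
    rw [Pi.single_eq_same, Pi.zero_apply] at h0
    exact one_ne_zero h0
  set k : ℕ := (univ.filter fun j => A n ω0 i0 j = 0).card with hkdef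
  have hkM : k ≤ m n := by
    rw [hkdef]
    have hle := Finset.card_filter_le (univ : Finset (Fin (m n))) (fun j => A n ω0 i0 j = 0)
    rwa [card_univ, Fintype.card_fin] at hle
  have hkt : t * (m n:ℝ) ≤ (k:ℝ) := hi0t
  have hcount : ∀ (z z' : Fin (m n) → K), π z = π z' →
      ∀ a₀, (univ.filter fun j => z j = a₀).card = (univ.filter fun j => z' j = a₀).card := by
    intro z z' hzz a₀
    exact congrArg Fin.val (congrFun hzz a₀)
  clear_value c₀ t δ0 a b γ R1 ε Gf π B Sv
  -- lower bound on jointSpec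
  have hjs : ∀ ω, (((Gf ω).filter fun i => π (A n ω i) = v).card : ℝ) / (q:ℝ)^n
      ≤ jointSpec (fun x' : Fin n → K => Matrix.vecMul x' (A n ω))
          (empDist (Pi.single i0 (1:K))) (empDist (A n ω0 i0)) := by
    intro ω
    unfold jointSpec
    rw [hqdef]
    have hinj : ((Gf ω).filter fun i => π (A n ω i) = v).card
        ≤ (univ.filter fun x' : Fin n → K =>
            empDist x' = empDist (Pi.single i0 (1:K))
              ∧ empDist (Matrix.vecMul x' (A n ω)) = empDist (A n ω0 i0)).card := by
      apply Finset.card_le_card_of_injOn (fun i => Pi.single i (1:K))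
      · intro i hi
        rw [mem_coe, mem_filter] at hi ⊢
        refine ⟨mem_univ _, empDist_single n i i0, ?_⟩
        have hvm : Matrix.vecMul (Pi.single i (1:K)) (A n ω) = A n ω i := by
          rw [Matrix.single_vecMul]; funext j; exact congrFun (one_smul K _) j
        rw [hvm]
        exact empDist_eq_of_counts _ _ (hcount _ _ (hi.2.trans hi0v.symm))
      · intro i1 _ i2 _ he
        by_contra hne
        have h12 := congrFun he i1
        simp only at h12
        rw [Pi.single_eq_same, Pi.single_eq_of_ne hne] at h12
        exact one_ne_zero h12
    exact (div_le_div_iff_of_pos_right (by positivity)).mpr (by exact_mod_cast hinj)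
  have hnum : Sv / (q:ℝ)^n ≤ ∑ ω, μ n ω *
      jointSpec (fun x' : Fin n → K => Matrix.vecMul x' (A n ω))
        (empDist (Pi.single i0 (1:K))) (empDist (A n ω0 i0)) := by
    rw [hSvdef, Finset.sum_div]
    apply Finset.sum_le_sum
    intro ω _
    rw [mul_div_assoc]
    exact mul_le_mul_of_nonneg_left (hjs ω) (hμ0 n ω)
  have hnum0 : (0:ℝ) ≤ ∑ ω, μ n ω *
      jointSpec (fun x' : Fin n → K => Matrix.vecMul x' (A n ω))
        (empDist (Pi.single i0 (1:K))) (empDist (A n ω0 i0)) := by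
    apply Finset.sum_nonneg
    intro ω _
    apply mul_nonneg (hμ0 n ω)
    unfold jointSpec
    exact div_nonneg (Nat.cast_nonneg _) (pow_nonneg (Nat.cast_nonneg _) _)
  -- denominator quantities
  have hqn0 : (0:ℝ) < (q:ℝ)^n := by positivity
  have hqm0 : (0:ℝ) < (q:ℝ)^(m n) := by positivity
  set CpN : ℕ := ((univ : Finset (Fin n → K)).filter
    fun x' => empDist x' = empDist (Pi.single i0 (1:K))).card with hCp
  set CqN : ℕ := ((univ : Finset (Fin (m n) → K)).filter
    fun z => empDist z = empDist (A n ω0 i0)).card with hCq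
  have hCp1 : 1 ≤ CpN := by
    rw [hCp]
    exact Finset.card_pos.mpr ⟨Pi.single i0 (1:K), mem_filter.mpr ⟨mem_univ _, rfl⟩⟩
  have hCpn : CpN ≤ n := by rw [hCp]; exact card_typeclass_single_le i0
  have hCq1 : 1 ≤ CqN := by
    rw [hCq]
    exact Finset.card_pos.mpr ⟨A n ω0 i0, mem_filter.mpr ⟨mem_univ _, rfl⟩⟩
  have hCqb : CqN ≤ (m n).choose k * (q - 1) ^ (m n - k) := by
    rw [hCq]
    exact card_typeclass_le_choose hM0 (A n ω0 i0)
  clear_value k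
  have hCp0 : (0:ℝ) < CpN := by exact_mod_cast hCp1
  have hCq0 : (0:ℝ) < CqN := by exact_mod_cast hCq1
  have hq1ne : ((q:ℝ)-1) ≠ 0 := hqm1.ne'
  have hBne : B ≠ 0 := hB0.ne'
  have hnne : (n:ℝ) ≠ 0 := hnR0.ne'
  have hCqne : (CqN:ℝ) ≠ 0 := hCq0.ne'
  have hqnne : (q:ℝ)^n ≠ 0 := hqn0.ne'
  have hqmne : (q:ℝ)^(m n) ≠ 0 := hqm0.ne'
  have hden_eq : fullJointSpec K K n (m n)
        (empDist (Pi.single i0 (1:K))) (empDist (A n ω0 i0))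
      = ((CpN:ℝ)/(q:ℝ)^n) * ((CqN:ℝ)/(q:ℝ)^(m n)) := by
    unfold fullJointSpec specS
    rw [card_univ, card_univ, Fintype.card_fun, Fintype.card_fun, Fintype.card_fin,
      Fintype.card_fin, ← hqdef, hCp, hCq]
    push_cast
    rfl
  clear_value CpN CqN
  set Cb : ℝ := (((m n).choose k : ℕ) : ℝ) * ((q:ℝ)-1)^(m n - k) with hCbdef
  have hCbR : (CqN:ℝ) ≤ Cb := by
    calc (CqN:ℝ) ≤ (((m n).choose k * (q-1)^(m n - k) : ℕ) : ℝ) := by exact_mod_cast hCqb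
      _ = Cb := by rw [hCbdef]; push_cast [Nat.cast_sub hq2.le]; ring
  have hCb0 : (0:ℝ) < Cb := by
    rw [hCbdef]
    apply mul_pos _ (pow_pos hqm1 _)
    exact_mod_cast Nat.choose_pos hkM
  have hCbne : Cb ≠ 0 := hCb0.ne'
  have hexp : Cb * Real.exp (γ * (m n)) ≤ (q:ℝ)^(m n) := by
    have h1 := exp_le_pow_mul (m := m n) (k := k) hkM ha.le hb0 hb1.le hkt
    have h2 : Cb * (a^k * b^(m n - k)) ≤ (q:ℝ)^(m n) := by
      have hqm : ((q:ℝ))^(m n) = (q:ℝ)^k * (q:ℝ)^(m n - k) := by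
        rw [← pow_add, Nat.add_sub_cancel' hkM]
      have hiden : Cb * (a^k * b^(m n - k))
          = ((((m n).choose k : ℕ):ℝ) * (t^k * (1-t)^(m n - k))) * ((q:ℝ)^k * (q:ℝ)^(m n - k)) := by
        rw [hCbdef, hadef, hbdef, mul_pow, div_pow, mul_pow]
        have hpne : ((q:ℝ)-1)^(m n - k) ≠ 0 := pow_ne_zero _ hq1ne
        field_simp
      rw [hiden, hqm]
      calc ((((m n).choose k : ℕ):ℝ) * (t^k * (1-t)^(m n - k))) * ((q:ℝ)^k * (q:ℝ)^(m n - k))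
          ≤ 1 * ((q:ℝ)^k * (q:ℝ)^(m n - k)) :=
            mul_le_mul_of_nonneg_right (choose_bound hkM ht0 ht1) (by positivity)
        _ = (q:ℝ)^k * (q:ℝ)^(m n - k) := one_mul _
    calc Cb * Real.exp (γ * (m n)) ≤ Cb * (a^k * b^(m n - k)) := by
          apply mul_le_mul_of_nonneg_left _ hCb0.le
          simp only [hγdef]
          exact h1
      _ ≤ (q:ℝ)^(m n) := h2
  have hmain : δ0 * Real.exp (γ * (m n)) / B ≤ Sv * (q:ℝ)^(m n)/((n:ℝ)*CqN) := by
    have s1 : δ0 * Real.exp (γ * (m n)) / B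
        = (δ0 * (n:ℝ)/B) * (Cb * Real.exp (γ * (m n))) / ((n:ℝ) * Cb) := by
      field_simp
    rw [s1]
    apply div_le_div₀ (by positivity)
      (mul_le_mul hSv hexp (by positivity) hSvpos.le)
      (mul_pos hnR0 hCq0)
      (mul_le_mul_of_nonneg_left hCbR hnR0.le)
  have L2 : (Sv/(q:ℝ)^n)/(((n:ℝ)/(q:ℝ)^n) * ((CqN:ℝ)/(q:ℝ)^(m n)))
      = Sv * (q:ℝ)^(m n) / ((n:ℝ) * CqN) := by
    field_simp
  have hdpos : 0 < ((CpN:ℝ)/(q:ℝ)^n) * ((CqN:ℝ)/(q:ℝ)^(m n)) :=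
    mul_pos (div_pos hCp0 hqn0) (div_pos hCq0 hqm0)
  have hdle : ((CpN:ℝ)/(q:ℝ)^n) * ((CqN:ℝ)/(q:ℝ)^(m n))
      ≤ ((n:ℝ)/(q:ℝ)^n) * ((CqN:ℝ)/(q:ℝ)^(m n)) := by
    apply mul_le_mul_of_nonneg_right _ (div_nonneg (Nat.cast_nonneg _) hqm0.le)
    exact (div_le_div_iff_of_pos_right hqn0).mpr (by exact_mod_cast hCpn)
  have L1 := div_le_div₀ hnum0 hnum hdpos hdle
  have L4 : Real.exp ((n:ℝ) * ε) < δ0 * Real.exp (γ * (m n)) / B := by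
    have step1 : δ0 * Real.exp (γ * (m n)) / (δ0 * Real.exp (γ/2 * (m n)))
        ≤ δ0 * Real.exp (γ * (m n)) / B :=
      div_le_div_of_nonneg_left (by positivity) hB0 hpoly
    have step2 : δ0 * Real.exp (γ * (m n)) / (δ0 * Real.exp (γ/2 * (m n)))
        = Real.exp (γ/2 * (m n)) := by
      rw [mul_div_mul_left _ _ hδ0.ne', ← Real.exp_sub]
      congr 1
      ring
    have step3 : Real.exp ((n:ℝ) * ε) < Real.exp (γ/2 * (m n)) := by
      rw [Real.exp_lt_exp]
      simp only [hεdef]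
      rw [show (n:ℝ)*(γ/(4*R1)) = (n:ℝ)*γ/(4*R1) from by ring, div_lt_iff₀ (by positivity)]
      have k1 : (n:ℝ)*γ ≤ (R1*(m n))*γ := mul_le_mul_of_nonneg_right hnM hγ.le
      have k2 : (0:ℝ) < R1*(m n)*γ := mul_pos (mul_pos hR1p hMR) hγ
      have k3 : γ/2*(m n)*(4*R1) = (R1*(m n))*γ + (R1*(m n))*γ := by ring
      rw [k3]
      linarith only [k1, k2]
    rw [step2] at step1
    exact lt_of_lt_of_le step3 step1
  have hfinal : Real.exp ((n:ℝ) * ε)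
      < alphaE (μ n) (fun ω (x' : Fin n → K) => Matrix.vecMul x' (A n ω))
          (empDist (Pi.single i0 (1:K))) (empDist (A n ω0 i0)) := by
    unfold alphaE
    rw [hden_eq]
    calc Real.exp ((n:ℝ) * ε) < δ0 * Real.exp (γ * (m n)) / B := L4
      _ ≤ Sv * (q:ℝ)^(m n) / ((n:ℝ) * CqN) := hmain
      _ = (Sv/(q:ℝ)^n)/(((n:ℝ)/(q:ℝ)^n) * ((CqN:ℝ)/(q:ℝ)^(m n))) := L2.symm
      _ ≤ _ := L1
  exact absurd (hbound (Pi.single i0 (1:K)) hx0 (A n ω0 i0)) (not_le.mpr hfinal)
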